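/- Let G be a quasi-acyclic 2-path-bounded oriented graph without multiple edges and triangles, and let R be any complete system of relations for G. Let R_L ⊆ R be the subset of relations in which every edge occurring on either side is a loop. Then |R_L| ≥ 𝔏(G), the number of loops of G. -/

import Mathlib

/-- An oriented graph: finite nonempty sets of vertices and edges with
origin and tail maps. -/
structure OrientedGraph where
  V : Type
  E : Type
  [fintypeV : Fintype V]
  [fintypeE : Fintype E]
  [nonemptyV : Nonempty V]
  [nonemptyE : Nonempty E]
  o : E → V
  t : E → V

attribute [instance] OrientedGraph.fintypeV OrientedGraph.fintypeE
  OrientedGraph.nonemptyV OrientedGraph.nonemptyE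

namespace OrientedGraph

variable (G : OrientedGraph)

/-- `G.IsPath p u v` : the edge sequence `p` is a path from `u` to `v`
(consecutive edges are composable; paths of length 0 at any vertex are allowed). -/
def IsPath (p : List G.E) (u v : G.V) : Prop :=
  List.Chain' (fun e f => G.t e = G.o f) p ∧
  ((p = [] ∧ u = v) ∨
    ∃ h : p ≠ [], u = G.o (p.head h) ∧ v = G.t (p.getLast h))

/-- The label of an edge sequence: the product of the labels of its edges
(the empty sequence maps to `1`). -/
def labelProd {M : Type} [Monoid M] (l : G.E → M) (s : List G.E) : M :=
  (s.map l).prod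

/-- The diagram `(G, l)` is commutative: any two paths with the same origin and
the same tail have equal labels. -/
def IsCommutative {M : Type} [Monoid M] (l : G.E → M) : Prop :=
  ∀ (u v : G.V) (p₁ p₂ : List G.E),
    G.IsPath p₁ u v → G.IsPath p₂ u v → G.labelProd l p₁ = G.labelProd l p₂

/-- A complete system of relations for `G`: for every monoid `M` and every
labeling `l : E → M`, the diagram `(G, l)` is commutative iff all relations hold. -/
def IsComplete (R : Finset (List G.E × List G.E)) : Prop :=
  ∀ (M : Type) [Monoid M], ∀ l : G.E → M,
    G.IsCommutative l ↔ ∀ r ∈ R, G.labelProd l r.1 = G.labelProd l r.2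

/-- A minimal complete system of relations: no proper subset is complete. -/
def IsMinimalComplete (R : Finset (List G.E × List G.E)) : Prop :=
  G.IsComplete R ∧ ∀ R' : Finset (List G.E × List G.E), R' ⊂ R → ¬ G.IsComplete R'

/-- The commutativity rank `η(G)`: the minimal cardinality of a complete
system of relations for `G`. -/
noncomputable def eta : ℕ :=
  sInf {n : ℕ | ∃ R : Finset (List G.E × List G.E), G.IsComplete R ∧ R.card = n}

/-- `S'` is obtained from `S` by one multiplication. -/
def MulStep (S S' : Set (List G.E)) : Prop :=
  ∃ s ∈ S, ∃ s' ∈ S, S' = S ∪ {s ++ s'}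

/-- `G.mCost S S'` : the minimal number of multiplications needed to obtain `S'`
from `S` (`⊤` if impossible). -/
noncomputable def mCost (S S' : Set (List G.E)) : ℕ∞ :=
  sInf {k : ℕ∞ | ∃ n : ℕ, k = n ∧ ∃ f : ℕ → Set (List G.E),
    f 0 = S ∧ f n = S' ∧ ∀ i < n, G.MulStep (f i) (f (i + 1))}

/-- `S_R`: the set of all edge sequences appearing in the relations of `R`. -/
def relSet (R : Finset (List G.E × List G.E)) : Set (List G.E) :=
  {s | ∃ r ∈ R, s = r.1 ∨ s = r.2}

/-- `ℰ`: the empty sequence together with all one-edge sequences. -/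
def baseSet : Set (List G.E) :=
  {s | s = [] ∨ ∃ e : G.E, s = [e]}

/-- `m(R)`: the minimal number of multiplications needed to build all sequences
appearing in `R`, starting from `ℰ`. -/
noncomputable def mRel (R : Finset (List G.E × List G.E)) : ℕ∞ :=
  sInf {k : ℕ∞ | ∃ S : Set (List G.E), G.relSet R ⊆ S ∧ k = G.mCost G.baseSet S}

/-- The multiplication rank `ν(G)`. -/
noncomputable def nu : ℕ∞ :=
  sInf {k : ℕ∞ | ∃ R : Finset (List G.E × List G.E), G.IsComplete R ∧ k = G.mRel R}

/-- A 4-tuple of edges `(a, b, c, d)` forms a rhomboid. -/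
def IsRhomboid (r : G.E × G.E × G.E × G.E) : Prop :=
  G.o r.1 = G.o r.2.2.1 ∧ G.t r.2.1 = G.t r.2.2.2 ∧
  G.t r.1 = G.o r.2.1 ∧ G.t r.2.2.1 = G.o r.2.2.2 ∧
  G.o r.1 ≠ G.t r.1 ∧ G.o r.1 ≠ G.o r.2.2.2 ∧ G.o r.1 ≠ G.t r.2.2.2 ∧
  G.t r.1 ≠ G.o r.2.2.2 ∧ G.t r.1 ≠ G.t r.2.2.2 ∧ G.o r.2.2.2 ≠ G.t r.2.2.2

/-- Two rhomboids `(a, b, c, d)` and `(a', b', c', d')` are disjoint. -/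
def RhDisjoint (r r' : G.E × G.E × G.E × G.E) : Prop :=
  (r.1 ≠ r'.1 ∨ r.2.1 ≠ r'.2.1) ∧
  (r.1 ≠ r'.2.2.1 ∨ r.2.1 ≠ r'.2.2.2) ∧
  (r.2.2.1 ≠ r'.2.2.1 ∨ r.2.2.2 ≠ r'.2.2.2) ∧
  (r.2.2.1 ≠ r'.1 ∨ r.2.2.2 ≠ r'.2.1)

/-- `𝔯𝔥(G)`: the maximal cardinality of a family of pairwise disjoint rhomboids in `G`. -/
noncomputable def rhNum : ℕ :=
  sSup {n : ℕ | ∃ F : Finset (G.E × G.E × G.E × G.E),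
    (∀ r ∈ F, G.IsRhomboid r) ∧
    (∀ r ∈ F, ∀ r' ∈ F, r ≠ r' → G.RhDisjoint r r') ∧ F.card = n}

/-- `𝔏(G)`: the number of loops of `G`. -/
noncomputable def loopCount : ℕ :=
  Nat.card {e : G.E // G.o e = G.t e}

/-- `G` is quasi-acyclic: no directed cycle visiting two or more distinct vertices. -/
def QuasiAcyclic : Prop :=
  ∀ u v : G.V, u ≠ v →
    ∀ p q : List G.E, G.IsPath p u v → G.IsPath q v u → False

/-- `G` is 2-path-bounded: every oriented path avoiding loop edges has length at most 2. -/
def TwoPathBounded : Prop :=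
  ∀ (p : List G.E) (u v : G.V), G.IsPath p u v →
    (∀ e ∈ p, G.o e ≠ G.t e) → p.length ≤ 2

/-- `G` has a pair of multiple edges. -/
def HasMultipleEdges : Prop :=
  ∃ e e' : G.E, e ≠ e' ∧ G.t e = G.t e' ∧ G.o e = G.o e' ∧ G.t e ≠ G.o e

/-- `G` has a triangle. -/
def HasTriangle : Prop :=
  ∃ a b c : G.E, G.o a = G.o b ∧ G.t b = G.o c ∧ G.t c = G.t a ∧
    G.o a ≠ G.t a ∧ G.o b ≠ G.t b ∧ G.o c ≠ G.t c

/-- `G` has no loops. -/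
def NoLoops : Prop := ∀ e : G.E, G.o e ≠ G.t e

/-- Every edge occurring on either side of the relation `r` is a loop. -/
def AllLoops (r : List G.E × List G.E) : Prop :=
  (∀ e ∈ r.1, G.o e = G.t e) ∧ (∀ e ∈ r.2, G.o e = G.t e)

/-- Both sides of the relation `r` contain at least one non-loop edge. -/
def BothSidesNonLoop (r : List G.E × List G.E) : Prop :=
  (∃ e ∈ r.1, G.o e ≠ G.t e) ∧ (∃ e ∈ r.2, G.o e ≠ G.t e)

end OrientedGraph

/-- The triploid `T(n₁, n₂, n₃, n₀, e)`. -/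
def Triploid (n₁ n₂ n₃ n₀ e : ℕ) (hn₁ : 0 < n₁) (he : n₂ * (n₁ + n₃) ≤ e)
    (he₀ : 0 < e) : OrientedGraph where
  V := Fin n₀ ⊕ Fin n₁ ⊕ Fin n₂ ⊕ Fin n₃
  E := (Fin n₁ × Fin n₂) ⊕ (Fin n₂ × Fin n₃) ⊕ Fin (e - n₂ * (n₁ + n₃))
  nonemptyV := ⟨Sum.inr (Sum.inl ⟨0, hn₁⟩)⟩
  nonemptyE := by
    by_cases h : n₂ * (n₁ + n₃) < e
    · exact ⟨Sum.inr (Sum.inr ⟨0, by omega⟩)⟩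
    · have h2 : 0 < n₂ := by
        rcases Nat.eq_zero_or_pos n₂ with h0 | h0
        · exfalso; subst h0; simp at h; omega
        · exact h0
      exact ⟨Sum.inl (⟨0, hn₁⟩, ⟨0, h2⟩)⟩
  o := Sum.elim (fun p => Sum.inr (Sum.inl p.1))
        (Sum.elim (fun p => Sum.inr (Sum.inr (Sum.inl p.1)))
          (fun _ => Sum.inr (Sum.inl ⟨0, hn₁⟩)))
  t := Sum.elim (fun p => Sum.inr (Sum.inr (Sum.inl p.2)))
        (Sum.elim (fun p => Sum.inr (Sum.inr (Sum.inr p.2)))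
          (fun _ => Sum.inr (Sum.inl ⟨0, hn₁⟩)))

namespace OrientedGraph

open Classical

variable (G : OrientedGraph)

lemma isPath_nil_iff (u v : G.V) : G.IsPath [] u v ↔ u = v := by
  simp [OrientedGraph.IsPath]; exact fun _ => List.isChain_nil

lemma isPath_cons_iff (e : G.E) (p : List G.E) (u v : G.V) :
    G.IsPath (e :: p) u v ↔ u = G.o e ∧ G.IsPath p (G.t e) v := by
  constructor
  · rintro ⟨hc, h⟩
    rcases h with ⟨h, -⟩ | ⟨h, hu, hv⟩
    · simp at h
    · refine ⟨by simpa using hu, ?_⟩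
      cases p with
      | nil => exact ⟨List.isChain_nil, Or.inl ⟨rfl, by simpa using hv.symm⟩⟩
      | cons f q =>
        replace hc := List.isChain_cons_cons.mp hc
        refine ⟨hc.2, Or.inr ⟨List.cons_ne_nil _ _, by simpa using hc.1, ?_⟩⟩
        rw [List.getLast_cons (List.cons_ne_nil _ _)] at hv
        exact hv
  · rintro ⟨hu, hp, h⟩
    rcases h with ⟨rfl, rfl⟩ | ⟨h, hw, hv⟩
    · exact ⟨List.isChain_singleton _, Or.inr ⟨List.cons_ne_nil _ _, by simpa using hu, by simpa⟩⟩
    · cases p with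
      | nil => simp at h
      | cons f q =>
        refine ⟨List.isChain_cons_cons.mpr ⟨by simpa using hw, hp⟩,
          Or.inr ⟨List.cons_ne_nil _ _, by simpa using hu, ?_⟩⟩
        rw [List.getLast_cons (List.cons_ne_nil _ _)]
        exact hv

lemma isPath_append_iff (p q : List G.E) (u v : G.V) :
    G.IsPath (p ++ q) u v ↔ ∃ w, G.IsPath p u w ∧ G.IsPath q w v := by
  induction p generalizing u with
  | nil => simp [isPath_nil_iff]
  | cons e p ih =>
    simp only [List.cons_append, isPath_cons_iff, ih]
    constructor
    · rintro ⟨rfl, w, h1, h2⟩; exact ⟨w, ⟨rfl, h1⟩, h2⟩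
    · rintro ⟨w, ⟨rfl, h1⟩, h2⟩; exact ⟨rfl, w, h1, h2⟩

lemma no_nonloop_cycle (hqa : G.QuasiAcyclic) {p : List G.E} {u : G.V}
    (hp : G.IsPath p u u) {a : G.E} (ha : a ∈ p) (hl : G.o a ≠ G.t a) : False := by
  obtain ⟨q₁, q₂, rfl⟩ := List.append_of_mem ha
  rw [isPath_append_iff] at hp
  obtain ⟨w, h1, h2⟩ := hp
  rw [isPath_cons_iff] at h2
  obtain ⟨rfl, h2⟩ := h2
  refine hqa (G.o a) (G.t a) hl [a] (q₂ ++ q₁) ?_ ?_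
  · rw [isPath_cons_iff]
    exact ⟨rfl, (G.isPath_nil_iff _ _).mpr rfl⟩
  · rw [isPath_append_iff]; exact ⟨u, h2, h1⟩

lemma loop_path_eq {p : List G.E} {u v : G.V} (hp : G.IsPath p u v)
    (hl : ∀ e ∈ p, G.o e = G.t e) : u = v := by
  induction p generalizing u with
  | nil => exact (G.isPath_nil_iff _ _).mp hp
  | cons e p ih =>
    rw [isPath_cons_iff] at hp
    obtain ⟨rfl, hp⟩ := hp
    rw [hl e (by simp)]
    exact ih hp (fun f hf => hl f (by simp [hf]))

/-- The labeling used in the proof: non-loop edges map to `0`, a loop edge `e`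
maps to `ofAdd (x e)` in `WithZero (Multiplicative ℚ)`. -/
noncomputable def lab (x : {e : G.E // G.o e = G.t e} → ℚ) :
    G.E → WithZero (Multiplicative ℚ) :=
  fun e => if h : G.o e = G.t e then ((Multiplicative.ofAdd (x ⟨e, h⟩) : Multiplicative ℚ) :
    WithZero (Multiplicative ℚ)) else 0

/-- The linear form associated to an edge sequence. -/
noncomputable def lform (s : List G.E) :
    ({e : G.E // G.o e = G.t e} → ℚ) →ₗ[ℚ] ℚ :=
  (s.map (fun e => if h : G.o e = G.t e then
    (LinearMap.proj ⟨e, h⟩ : ({e : G.E // G.o e = G.t e} → ℚ) →ₗ[ℚ] ℚ) else 0)).sum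

lemma lform_nil : G.lform [] = 0 := rfl

lemma lform_cons (e : G.E) (s : List G.E) :
    G.lform (e :: s) = (if h : G.o e = G.t e then
      (LinearMap.proj ⟨e, h⟩ : ({e : G.E // G.o e = G.t e} → ℚ) →ₗ[ℚ] ℚ) else 0)
      + G.lform s := by
  simp [lform]

lemma labelProd_lab_of_allLoops (x : {e : G.E // G.o e = G.t e} → ℚ) {s : List G.E}
    (hs : ∀ e ∈ s, G.o e = G.t e) :
    G.labelProd (G.lab x) s =
      ((Multiplicative.ofAdd (G.lform s x) : Multiplicative ℚ) :
        WithZero (Multiplicative ℚ)) := by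
  induction s with
  | nil => simp [labelProd, lform_nil]
  | cons e s ih =>
    have he : G.o e = G.t e := hs e (by simp)
    have hrest := ih (fun f hf => hs f (by simp [hf]))
    simp only [labelProd, List.map_cons, List.prod_cons] at hrest ⊢
    rw [hrest, lform_cons, LinearMap.add_apply, lab, dif_pos he, dif_pos he,
      ofAdd_add, WithZero.coe_mul, LinearMap.proj_apply]

lemma labelProd_lab_of_nonloop (x : {e : G.E // G.o e = G.t e} → ℚ) {s : List G.E}
    (hs : ∃ e ∈ s, G.o e ≠ G.t e) :
    G.labelProd (G.lab x) s = 0 := by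
  obtain ⟨e, he, hne⟩ := hs
  refine List.prod_eq_zero ?_
  refine List.mem_map.mpr ⟨e, he, ?_⟩
  simp [lab, dif_neg hne]

lemma isCommutative_lab_zero (hqa : G.QuasiAcyclic) : G.IsCommutative (G.lab 0) := by
  intro u v p₁ p₂ h₁ h₂
  by_cases c₁ : ∀ e ∈ p₁, G.o e = G.t e
  · have huv : u = v := G.loop_path_eq h₁ c₁
    by_cases c₂ : ∀ e ∈ p₂, G.o e = G.t e
    · rw [G.labelProd_lab_of_allLoops 0 c₁, G.labelProd_lab_of_allLoops 0 c₂, map_zero (G.lform p₁), map_zero (G.lform p₂)]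
    · push_neg at c₂
      obtain ⟨a, ha, hna⟩ := c₂
      exact (G.no_nonloop_cycle hqa (huv ▸ h₂) ha hna).elim
  · push_neg at c₁
    obtain ⟨a, ha, hna⟩ := c₁
    by_cases c₂ : ∀ e ∈ p₂, G.o e = G.t e
    · have huv : u = v := G.loop_path_eq h₂ c₂
      exact (G.no_nonloop_cycle hqa (huv ▸ h₁) ha hna).elim
    · push_neg at c₂
      rw [G.labelProd_lab_of_nonloop 0 ⟨a, ha, hna⟩, G.labelProd_lab_of_nonloop 0 c₂]

lemma lab_comm_apply_zero {x : {e : G.E // G.o e = G.t e} → ℚ}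
    (hc : G.IsCommutative (G.lab x)) : x = 0 := by
  funext e
  obtain ⟨e, he⟩ := e
  have h1 : G.IsPath [] (G.o e) (G.o e) := (G.isPath_nil_iff _ _).mpr rfl
  have h2 : G.IsPath [e] (G.o e) (G.o e) := by
    rw [isPath_cons_iff]
    exact ⟨rfl, (G.isPath_nil_iff _ _).mpr he.symm⟩
  have := hc (G.o e) (G.o e) [] [e] h1 h2
  simp only [labelProd, List.map_nil, List.prod_nil, List.map_cons, List.prod_cons,
    List.prod_nil, mul_one, lab, dif_pos he] at this
  have : Multiplicative.ofAdd (x ⟨e, he⟩) = 1 := by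
    rwa [show (1 : WithZero (Multiplicative ℚ)) = ((1 : Multiplicative ℚ) :
      WithZero (Multiplicative ℚ)) from rfl, eq_comm, WithZero.coe_inj] at this
  simpa using ofAdd_eq_one.mp this

end OrientedGraph

/-- Theorem: for a complete system of relations `R` of a quasi-acyclic, 2-path-bounded
graph without multiple edges and triangles, `|R_L| ≥ 𝔏(G)`, where `R_L` consists of the
relations in which every edge is a loop. -/
theorem card_RL_ge_loopCount (G : OrientedGraph) (hqa : G.QuasiAcyclic)
    (hpb : G.TwoPathBounded) (hme : ¬ G.HasMultipleEdges) (htr : ¬ G.HasTriangle)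
    (R : Finset (List G.E × List G.E)) (hR : G.IsComplete R) :
    G.loopCount ≤
      Set.ncard {r : List G.E × List G.E | r ∈ R ∧ G.AllLoops r} := by
  
  classical
  set L := {e : G.E // G.o e = G.t e} with hL
  have hcomm0 := G.isCommutative_lab_zero hqa
  have hrel0 := (hR _ (G.lab 0)).mp hcomm0
  have hdi : ∀ r ∈ R, G.AllLoops r ∨
      ((∃ e ∈ r.1, G.o e ≠ G.t e) ∧ (∃ e ∈ r.2, G.o e ≠ G.t e)) := by
    intro r hr
    by_cases h1 : ∀ e ∈ r.1, G.o e = G.t e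
    · by_cases h2 : ∀ e ∈ r.2, G.o e = G.t e
      · exact Or.inl ⟨h1, h2⟩
      · push_neg at h2
        exfalso
        have h := hrel0 r hr
        rw [G.labelProd_lab_of_allLoops 0 h1, G.labelProd_lab_of_nonloop 0 h2] at h
        simp at h
    · push_neg at h1
      by_cases h2 : ∀ e ∈ r.2, G.o e = G.t e
      · exfalso
        have h := hrel0 r hr
        rw [G.labelProd_lab_of_nonloop 0 h1, G.labelProd_lab_of_allLoops 0 h2] at h
        simp at h
      · push_neg at h2; exact Or.inr ⟨h1, h2⟩
  set S : Finset (List G.E × List G.E) := R.filter (fun r => G.AllLoops r) with hS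
  have hset : {r : List G.E × List G.E | r ∈ R ∧ G.AllLoops r} = ↑S := by
    ext r; simp [hS]
  rw [hset, Set.ncard_coe_finset]
  let Φ : (L → ℚ) →ₗ[ℚ] (↑S → ℚ) :=
    LinearMap.pi (fun r => G.lform r.1.1 - G.lform r.1.2)
  have hinj : Function.Injective Φ := by
    rw [injective_iff_map_eq_zero]
    intro x hx
    have hrels : ∀ r ∈ R, G.labelProd (G.lab x) r.1 = G.labelProd (G.lab x) r.2 := by
      intro r hr
      rcases hdi r hr with ⟨h1, h2⟩ | ⟨h1, h2⟩
      · have hrS : r ∈ S := Finset.mem_filter.mpr ⟨hr, h1, h2⟩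
        have h0 := congrFun hx ⟨r, hrS⟩
        simp only [Φ, LinearMap.pi_apply, LinearMap.sub_apply, Pi.zero_apply] at h0
        rw [G.labelProd_lab_of_allLoops x h1, G.labelProd_lab_of_allLoops x h2,
          sub_eq_zero.mp h0]
      · rw [G.labelProd_lab_of_nonloop x h1, G.labelProd_lab_of_nonloop x h2]
    exact G.lab_comm_apply_zero ((hR _ (G.lab x)).mpr hrels)
  have hfr := LinearMap.finrank_le_finrank_of_injective hinj
  rw [Module.finrank_fintype_fun_eq_card, Module.finrank_fintype_fun_eq_card,
    Fintype.card_coe] at hfr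
  have hlc : G.loopCount = Fintype.card L := by
    rw [OrientedGraph.loopCount, Nat.card_eq_fintype_card]
  rw [hlc]
  exact hfr
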